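/- Strong consistency of the optimal interval: Suppose the rate-function family satisfies the growth conditions (G1) and (G2), I_θ(0) = 0 for all θ ∈ Θ, J : Θ → ℝ is uniformly continuous on bounded subsets of Θ, and either Θ is open in E or θ̂_T takes values in Θ for all T > 0. Fix r > 0, δ > 0 and θ0 ∈ Θ, and suppose θ̂_T → θ0 P_{θ0}-almost surely as T → ∞. Then J̄^δ_{T,r}(θ̂_T) → J(θ0) and J̲^δ_{T,r}(θ̂_T) → J(θ0) P_{θ0}-almost surely as T → ∞. -/

import Mathlib

set_option autoImplicit false

open Filter Topology Metric Set MeasureTheory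

noncomputable section

variable {E : Type*} [NormedAddCommGroup E] [NormedSpace ℝ E]

/-- The sublevel set `S_{θ,r} = {ϑ ∈ E : I_θ(ϑ) ≤ r}` of the rate function. -/
def sublevelSet (I : E → E → ENNReal) (θ : E) (r : ℝ) : Set E :=
  {ϑ : E | I θ ϑ ≤ ENNReal.ofReal r}

/-- The open `δ`-fattening `S^δ_{θ,r}` of the sublevel set, where `S^0_{θ,r} = S_{θ,r}`;
for `δ > 0` it is the set of points at distance `< δ` from `S_{θ,r}`, i.e. the union of
open balls of radius `δ` around points of `S_{θ,r}`. -/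
def fatSublevel (I : E → E → ENNReal) (θ : E) (r δ : ℝ) : Set E :=
  if δ = 0 then sublevelSet I θ r
  else ⋃ ϑ ∈ sublevelSet I θ r, Metric.ball ϑ δ

/-- Growth condition (G1): for sequences `θ_n ∈ Θ` with `sup_n ‖θ_n‖ < ∞` and
`‖ϑ_n‖ → ∞`, `I_{θ_n}(ϑ_n) → ∞`. -/
def GrowthG1 (Θ : Set E) (I : E → E → ENNReal) : Prop :=
  ∀ θs ϑs : ℕ → E, (∀ n, θs n ∈ Θ) → (∃ C : ℝ, ∀ n, ‖θs n‖ ≤ C) →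
    Tendsto (fun n => ‖ϑs n‖) atTop atTop →
    Tendsto (fun n => I (θs n) (ϑs n)) atTop (nhds ⊤)

/-- Growth condition (G2): for sequences `θ_n ∈ Θ` with `‖θ_n‖ → ∞` and
`‖ϑ_n‖/‖θ_n‖ → ∞`, `limsup_n I_{θ_n}(ϑ_n) = ∞`. -/
def GrowthG2 (Θ : Set E) (I : E → E → ENNReal) : Prop :=
  ∀ θs ϑs : ℕ → E, (∀ n, θs n ∈ Θ) →
    Tendsto (fun n => ‖θs n‖) atTop atTop →
    Tendsto (fun n => ‖ϑs n‖ / ‖θs n‖) atTop atTop →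
    Filter.limsup (fun n => I (θs n) (ϑs n)) atTop = ⊤

/-- The upper confidence bound `J̄^δ_{T,r}(θ') = sup {J(θ) : θ ∈ Θ, a_T (θ' - θ) ∈ S^δ_{θ,r}}`. -/
def upperCB (Θ : Set E) (I : E → E → ENNReal) (J : E → ℝ) (r δ : ℝ) (a : ℝ → ℝ)
    (T : ℝ) (θ' : E) : ℝ :=
  sSup (J '' {θ : E | θ ∈ Θ ∧ a T • (θ' - θ) ∈ fatSublevel I θ r δ})

/-- The lower confidence bound `J̲^δ_{T,r}(θ') = inf {J(θ) : θ ∈ Θ, a_T (θ' - θ) ∈ S^δ_{θ,r}}`. -/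
def lowerCB (Θ : Set E) (I : E → E → ENNReal) (J : E → ℝ) (r δ : ℝ) (a : ℝ → ℝ)
    (T : ℝ) (θ' : E) : ℝ :=
  sInf (J '' {θ : E | θ ∈ Θ ∧ a T • (θ' - θ) ∈ fatSublevel I θ r δ})

variable {Ω : Type*} [MeasurableSpace Ω]

/-- LDP lower bound at `θ0` for the family `a_T (θ̂_T − θ0)` with speed `b_T`:
for every open `G ⊆ E`,
`liminf_{T→∞} (1/b_T) log P(a_T(θ̂_T − θ0) ∈ G) ≥ − inf_{ϑ ∈ G} I(ϑ)`. -/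
def LDPLowerAt (P : Measure Ω) (θhat : ℝ → Ω → E) (a b : ℝ → ℝ)
    (Irate : E → ENNReal) (θ0 : E) : Prop :=
  ∀ G : Set E, IsOpen G →
    -(((⨅ ϑ ∈ G, Irate ϑ) : ENNReal) : EReal) ≤
      Filter.liminf
        (fun T => (((b T)⁻¹ : ℝ) : EReal) *
          ENNReal.log (P {ω | a T • (θhat T ω - θ0) ∈ G})) atTop

/-- LDP upper bound at `θ0` for the family `a_T (θ̂_T − θ0)` with speed `b_T`:
for every closed `F ⊆ E`,
`limsup_{T→∞} (1/b_T) log P(a_T(θ̂_T − θ0) ∈ F) ≤ − inf_{ϑ ∈ F} I(ϑ)`. -/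
def LDPUpperAt (P : Measure Ω) (θhat : ℝ → Ω → E) (a b : ℝ → ℝ)
    (Irate : E → ENNReal) (θ0 : E) : Prop :=
  ∀ F : Set E, IsClosed F →
    Filter.limsup
      (fun T => (((b T)⁻¹ : ℝ) : EReal) *
        ENNReal.log (P {ω | a T • (θhat T ω - θ0) ∈ F})) atTop ≤
      -(((⨅ ϑ ∈ F, Irate ϑ) : ENNReal) : EReal)

private theorem lemA_aux (Θ : Set E) (I : E → E → ENNReal)
    (a : ℝ → ℝ) (hann : ∀ T, 0 ≤ a T) (hatop : Tendsto a atTop atTop)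
    (hG1 : GrowthG1 Θ I) (hG2 : GrowthG2 Θ I)
    (r δ : ℝ) (hδ : 0 < δ) (θ0 : E)
    (ε : ℝ) (hε : 0 < ε) :
    ∀ᶠ T in atTop, ∀ θ' ∈ Metric.closedBall θ0 1, ∀ θ ∈ Θ,
      a T • (θ' - θ) ∈ fatSublevel I θ r δ → ‖θ' - θ‖ < ε := by
  by_contra h
  rw [Filter.not_eventually] at h
  have h' := Filter.frequently_atTop.mp h
  choose T hTn hP using fun n : ℕ => h' (n : ℝ)
  push_neg at hP
  choose θ' hθ'cb θ hθΘ hmem hge using hP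
  -- unpack fatSublevel membership
  have hmem' : ∀ n, ∃ ϑ, I (θ n) ϑ ≤ ENNReal.ofReal r ∧
      ‖a (T n) • (θ' n - θ n) - ϑ‖ < δ := by
    intro n
    have := hmem n
    simp only [fatSublevel, if_neg hδ.ne', mem_iUnion, exists_prop, sublevelSet,
      Metric.mem_ball, mem_setOf_eq, dist_eq_norm] at this
    exact this
  choose ϑ hϑr hϑd using hmem'
  have hTtop : Tendsto T atTop atTop :=
    tendsto_atTop_mono hTn tendsto_natCast_atTop_atTop
  have haT : Tendsto (fun n => a (T n)) atTop atTop := hatop.comp hTtop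
  have key : ∀ n, a (T n) * ‖θ' n - θ n‖ - δ ≤ ‖ϑ n‖ := by
    intro n
    have h1 : ‖a (T n) • (θ' n - θ n)‖ - ‖ϑ n‖ ≤ ‖a (T n) • (θ' n - θ n) - ϑ n‖ :=
      norm_sub_norm_le _ _
    have h2 := hϑd n
    rw [norm_smul, Real.norm_eq_abs, abs_of_nonneg (hann (T n))] at h1
    linarith
  by_cases hcase : Tendsto (fun n => ‖θ n‖) atTop atTop
  · -- G2 case
    have hθ'norm : ∀ n, ‖θ' n‖ ≤ ‖θ0‖ + 1 := by
      intro n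
      have := Metric.mem_closedBall.mp (hθ'cb n)
      rw [dist_eq_norm] at this
      have := norm_sub_norm_le (θ' n) θ0
      linarith
    have hratio : Tendsto (fun n => ‖ϑ n‖ / ‖θ n‖) atTop atTop := by
      have hg : Tendsto (fun n => a (T n) / 2 - δ) atTop atTop := by
        have := tendsto_atTop_add_const_right atTop (-δ) (haT.atTop_div_const two_pos)
        simpa [sub_eq_add_neg] using this
      refine tendsto_atTop_mono' atTop ?_ hg
      filter_upwards [hcase.eventually_ge_atTop (2 * (‖θ0‖ + 2))] with n hn
      have han := hann (T n)
      have hθpos : (0:ℝ) < ‖θ n‖ := by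
        have : (0:ℝ) ≤ ‖θ0‖ := norm_nonneg _
        linarith
      rw [le_div_iff₀ hθpos]
      have h2 : a (T n) * (‖θ n‖ / 2) ≤ a (T n) * ‖θ' n - θ n‖ := by
        apply mul_le_mul_of_nonneg_left _ han
        have h3 : ‖θ n‖ - ‖θ' n‖ ≤ ‖θ' n - θ n‖ := by
          have := norm_sub_norm_le (θ n) (θ' n)
          rw [norm_sub_rev] at this
          linarith
        have := hθ'norm n
        have : (0:ℝ) ≤ ‖θ0‖ := norm_nonneg _
        have h4 := hθ'norm n
        linarith
      have h5 := key n
      nlinarith [mul_nonneg hδ.le (by have := norm_nonneg θ0; linarith : (0:ℝ) ≤ ‖θ n‖ - 1)]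
    have := hG2 θ ϑ hθΘ hcase hratio
    have hle : Filter.limsup (fun n => I (θ n) (ϑ n)) atTop ≤ ENNReal.ofReal r :=
      Filter.limsup_le_of_le (by isBoundedDefault) (Filter.Eventually.of_forall hϑr)
    rw [this] at hle
    exact ENNReal.ofReal_ne_top (top_le_iff.mp hle)
  · -- G1 case
    rw [Filter.tendsto_atTop] at hcase
    push_neg at hcase
    obtain ⟨C, hC⟩ := hcase
    have hC' : ∃ᶠ n in atTop, ‖θ n‖ < C := by
      simpa using hC
    obtain ⟨φ, hφmono, hφ⟩ := Filter.extraction_of_frequently_atTop hC'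
    have hϑtop : Tendsto (fun k => ‖ϑ (φ k)‖) atTop atTop := by
      have hg : Tendsto (fun k => a (T (φ k)) * ε - δ) atTop atTop := by
        have := (haT.comp hφmono.tendsto_atTop).atTop_mul_const hε
        exact this.atTop_add tendsto_const_nhds
      refine tendsto_atTop_mono (fun k => ?_) hg
      have h1 := key (φ k)
      have h2 : a (T (φ k)) * ε ≤ a (T (φ k)) * ‖θ' (φ k) - θ (φ k)‖ :=
        mul_le_mul_of_nonneg_left (hge (φ k)) (hann _)
      linarith
    have := hG1 (fun k => θ (φ k)) (fun k => ϑ (φ k)) (fun k => hθΘ (φ k))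
      ⟨C, fun k => (hφ k).le⟩ hϑtop
    have hev := (tendsto_order.mp this).1 (ENNReal.ofReal r) ENNReal.ofReal_lt_top
    obtain ⟨k, hk⟩ := hev.exists
    exact absurd (hϑr (φ k)) (not_le.mpr hk)


/-- strong consistency of the optimal interval: if `θ̂_T → θ0`
`P_{θ0}`-a.s., then `J̄^δ_{T,r}(θ̂_T) → J(θ0)` and `J̲^δ_{T,r}(θ̂_T) → J(θ0)`
`P_{θ0}`-a.s. -/
theorem stmt12 (Θ : Set E) (hΘ : Θ.Nonempty) (I : E → E → ENNReal) (J : E → ℝ)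
    [MeasurableSpace E] [BorelSpace E]
    (P : E → Measure Ω) (hP : ∀ θ, IsProbabilityMeasure (P θ))
    (θhat : ℝ → Ω → E) (hθhatmeas : ∀ T, Measurable (θhat T))
    (b a : ℝ → ℝ) (hbpos : ∀ T, 0 < b T) (hbtop : Tendsto b atTop atTop)
    (hadef : ∀ T, a T = Real.sqrt (T / b T)) (hatop : Tendsto a atTop atTop)
    (hG1 : GrowthG1 Θ I) (hG2 : GrowthG2 Θ I)
    (hI0 : ∀ θ ∈ Θ, I θ 0 = 0)
    (hJ : ∀ a0 > (0 : ℝ), ∀ θ0 ∈ Θ, UniformContinuousOn J (Metric.closedBall θ0 a0 ∩ Θ))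
    (hdom : IsOpen Θ ∨ ∀ T > (0 : ℝ), ∀ ω : Ω, θhat T ω ∈ Θ)
    (r δ : ℝ) (hr : 0 < r) (hδ : 0 < δ)
    (θ0 : E) (hθ0 : θ0 ∈ Θ)
    (hcons : ∀ᵐ ω ∂(P θ0), Tendsto (fun T => θhat T ω) atTop (nhds θ0)) :
    ∀ᵐ ω ∂(P θ0),
      Tendsto (fun T => upperCB Θ I J r δ a T (θhat T ω)) atTop (nhds (J θ0)) ∧
      Tendsto (fun T => lowerCB Θ I J r δ a T (θhat T ω)) atTop (nhds (J θ0)) := by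
  have hann : ∀ T, 0 ≤ a T := fun T => (hadef T) ▸ Real.sqrt_nonneg _
  filter_upwards [hcons] with ω hω
  have main : ∀ ε > (0:ℝ), ∀ᶠ T in atTop,
      dist (upperCB Θ I J r δ a T (θhat T ω)) (J θ0) < ε ∧
      dist (lowerCB Θ I J r δ a T (θhat T ω)) (J θ0) < ε := by
    intro ε hε
    obtain ⟨η, hη, hηJ⟩ := (Metric.uniformContinuousOn_iff.mp (hJ 2 two_pos θ0 hθ0))
      (ε/4) (by positivity)
    set ρ := min η 1 with hρdef
    have hρ : 0 < ρ := lt_min hη one_pos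
    have hρη : ρ ≤ η := min_le_left _ _
    have hρ1 : ρ ≤ 1 := min_le_right _ _
    have hE1 := lemA_aux Θ I a hann hatop hG1 hG2 r δ hδ θ0 ρ hρ
    have hE2 : ∀ᶠ T in atTop, dist (θhat T ω) θ0 < ρ := Metric.tendsto_nhds.mp hω ρ hρ
    have hE3 : ∀ᶠ T in atTop, θhat T ω ∈ Θ := by
      rcases hdom with hopen | hval
      · exact hω.eventually (hopen.mem_nhds hθ0)
      · exact (eventually_gt_atTop 0).mono fun T hT => hval T hT ω
    filter_upwards [hE1, hE2, hE3] with T h1 h2 h3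
    set θ' := θhat T ω with hθ'def
    have hθ'cb1 : θ' ∈ Metric.closedBall θ0 1 :=
      Metric.mem_closedBall.mpr (le_trans h2.le hρ1)
    set s : Set E := {θ : E | θ ∈ Θ ∧ a T • (θ' - θ) ∈ fatSublevel I θ r δ} with hsdef
    have hmemself : θ' ∈ s := by
      refine ⟨h3, ?_⟩
      rw [sub_self, smul_zero]
      simp only [fatSublevel, if_neg hδ.ne', mem_iUnion, exists_prop]
      exact ⟨0, by simp [sublevelSet, hI0 θ' h3], Metric.mem_ball_self hδ⟩
    have hθ0cb : θ0 ∈ Metric.closedBall θ0 2 ∩ Θ :=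
      ⟨Metric.mem_closedBall_self (by norm_num), hθ0⟩
    have hθ'cb : θ' ∈ Metric.closedBall θ0 2 ∩ Θ :=
      ⟨Metric.mem_closedBall.mpr (by linarith [h2.le]), h3⟩
    have hJθ' : dist (J θ') (J θ0) < ε/4 :=
      hηJ θ' hθ'cb θ0 hθ0cb (lt_of_lt_of_le h2 hρη)
    have hsub : ∀ θ ∈ s, dist (J θ) (J θ0) < ε/2 := by
      rintro θ ⟨hθΘ, hθmem⟩
      have hclose : ‖θ' - θ‖ < ρ := h1 θ' hθ'cb1 θ hθΘ hθmem
      have hdθ : dist θ θ' < ρ := by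
        rw [dist_eq_norm, ← norm_neg]
        simpa [neg_sub] using hclose
      have hθcb : θ ∈ Metric.closedBall θ0 2 ∩ Θ := by
        refine ⟨Metric.mem_closedBall.mpr ?_, hθΘ⟩
        calc dist θ θ0 ≤ dist θ θ' + dist θ' θ0 := dist_triangle _ _ _
          _ ≤ ρ + ρ := by linarith [h2.le]
          _ ≤ 2 := by linarith
      have h4 : dist (J θ) (J θ') < ε/4 := hηJ θ hθcb θ' hθ'cb (lt_of_lt_of_le hdθ hρη)
      calc dist (J θ) (J θ0) ≤ dist (J θ) (J θ') + dist (J θ') (J θ0) := dist_triangle _ _ _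
        _ < ε/4 + ε/4 := add_lt_add h4 hJθ'
        _ = ε/2 := by ring
    have hne : (J '' s).Nonempty := ⟨J θ', mem_image_of_mem _ hmemself⟩
    have hub : ∀ v ∈ J '' s, v ≤ J θ0 + ε/2 := by
      rintro v ⟨θ, hθs, rfl⟩
      have := hsub θ hθs
      rw [Real.dist_eq, abs_lt] at this
      linarith [this.2]
    have hlb : ∀ v ∈ J '' s, J θ0 - ε/2 ≤ v := by
      rintro v ⟨θ, hθs, rfl⟩
      have := hsub θ hθs
      rw [Real.dist_eq, abs_lt] at this
      linarith [this.1]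
    have hbddA : BddAbove (J '' s) := ⟨J θ0 + ε/2, hub⟩
    have hbddB : BddBelow (J '' s) := ⟨J θ0 - ε/2, hlb⟩
    have hsup_le : sSup (J '' s) ≤ J θ0 + ε/2 := csSup_le hne hub
    have hle_sup : J θ0 - ε/2 ≤ sSup (J '' s) :=
      le_trans (hlb _ (mem_image_of_mem _ hmemself)) (le_csSup hbddA (mem_image_of_mem _ hmemself))
    have hinf_le : sInf (J '' s) ≤ J θ0 + ε/2 :=
      le_trans (csInf_le hbddB (mem_image_of_mem _ hmemself)) (hub _ (mem_image_of_mem _ hmemself))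
    have hle_inf : J θ0 - ε/2 ≤ sInf (J '' s) := le_csInf hne hlb
    constructor
    · show dist (sSup (J '' s)) (J θ0) < ε
      rw [Real.dist_eq, abs_lt]
      constructor <;> linarith
    · show dist (sInf (J '' s)) (J θ0) < ε
      rw [Real.dist_eq, abs_lt]
      constructor <;> linarith
  exact ⟨Metric.tendsto_nhds.mpr fun ε hε => ((main ε hε).mono fun T h => h.1),
    Metric.tendsto_nhds.mpr fun ε hε => ((main ε hε).mono fun T h => h.2)⟩
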